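/- Let S ∈ R^{(n+1)×(n+1)} be skew-symmetric, θ : S^n → R differentiable with gradient ∇θ(x), and define T(x) = e^{Sθ(x)} x. Then the transpose of the Jacobian of T at x is ∇T(x) = (I − ∇θ(x) x^T S) e^{−Sθ(x)}, and if 1 − x^T S ∇θ(x) ≠ 0 then ∇T(x) is invertible with inverse e^{Sθ(x)} (I + ∇θ(x) x^T S / (1 − x^T S ∇θ(x))). -/

import Mathlib

open Matrix

attribute [local instance] Matrix.linftyOpNormedAddCommGroup Matrix.linftyOpNormedRing
  Matrix.linftyOpNormedAlgebra

namespace Stmt13Aux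

variable {n : ℕ}

lemma mulVec_isBoundedBilinearMap (n : ℕ) :
    IsBoundedBilinearMap ℝ
      (fun p : Matrix (Fin n) (Fin n) ℝ × (Fin n → ℝ) => p.1 *ᵥ p.2) where
  add_left A B v := Matrix.add_mulVec A B v
  smul_left c A v := Matrix.smul_mulVec c A v
  add_right A u v := Matrix.mulVec_add A u v
  smul_right c A v := Matrix.mulVec_smul A c v
  bound := ⟨1, one_pos, fun A v => by
    simpa using Matrix.linfty_opNorm_mulVec A v⟩

lemma vecMulVec_mulVec (a b v : Fin n → ℝ) :
    vecMulVec a b *ᵥ v = (b ⬝ᵥ v) • a := by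
  ext i
  simp only [Matrix.mulVec, dotProduct, Matrix.vecMulVec_apply, Pi.smul_apply,
    smul_eq_mul, Finset.sum_mul, Finset.mul_sum]
  exact Finset.sum_congr rfl fun k _ => by ring

lemma vecMulVec_transpose (a b : Fin n → ℝ) :
    (vecMulVec a b)ᵀ = vecMulVec b a := by
  ext i j
  simp [Matrix.vecMulVec_apply, mul_comm]

lemma sq_eq (g x : Fin n → ℝ) (S : Matrix (Fin n) (Fin n) ℝ) :
    (vecMulVec g x * S) * (vecMulVec g x * S) = (x ⬝ᵥ (S *ᵥ g)) • (vecMulVec g x * S) := by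
  have h1 : vecMulVec g x * S = vecMulVec g (x ᵥ* S) := by
    ext i j
    simp [Matrix.mul_apply, Matrix.vecMulVec_apply, Matrix.vecMul, dotProduct,
      Finset.mul_sum, mul_assoc]
  have h2 : (x ᵥ* S) ⬝ᵥ g = x ⬝ᵥ (S *ᵥ g) := (Matrix.dotProduct_mulVec x S g).symm
  rw [h1, ← h2]
  ext i j
  simp only [Matrix.mul_apply, Matrix.vecMulVec_apply, Matrix.smul_apply, dotProduct,
    smul_eq_mul, Finset.sum_mul, Finset.mul_sum]
  exact Finset.sum_congr rfl fun k _ => by ring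

lemma inv_aux {c : ℝ} (hc : 1 - c ≠ 0) (A : Matrix (Fin n) (Fin n) ℝ)
    (hA : A * A = c • A) :
    (1 - A) * (1 + (1 - c)⁻¹ • A) = 1 ∧ (1 + (1 - c)⁻¹ • A) * (1 - A) = 1 := by
  set t : ℝ := (1 - c)⁻¹ with ht
  have key : t • A - A - (t * c) • A = 0 := by
    have : t - 1 - t * c = 0 := by
      rw [ht]
      field_simp
      ring
    calc t • A - A - (t * c) • A = (t - 1 - t * c) • A := by
          rw [sub_smul, sub_smul, one_smul]
      _ = 0 := by rw [this, zero_smul]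
  constructor
  · have : (1 - A) * (1 + t • A) = 1 + (t • A - A - (t * c) • A) := by
      rw [mul_add, sub_mul, sub_mul, mul_one, mul_one, one_mul, mul_smul_comm, hA,
        smul_smul]
      abel
    rw [this, key, add_zero]
  · have : (1 + t • A) * (1 - A) = 1 + (t • A - A - (t * c) • A) := by
      rw [add_mul, mul_sub, mul_sub, one_mul, one_mul, mul_one, smul_mul_assoc, hA,
        smul_smul]
      abel
    rw [this, key, add_zero]

lemma exp_mul_exp_neg (m : ℕ) (B : Matrix (Fin m) (Fin m) ℝ) :
    NormedSpace.exp (-B) * NormedSpace.exp B = 1 ∧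
    NormedSpace.exp B * NormedSpace.exp (-B) = 1 := by
  have h1 : NormedSpace.exp (-B + B) = NormedSpace.exp (-B) * NormedSpace.exp B :=
    Matrix.exp_add_of_commute (-B) B (Commute.neg_left (Commute.refl B))
  have h2 : NormedSpace.exp (B + -B) = NormedSpace.exp B * NormedSpace.exp (-B) :=
    Matrix.exp_add_of_commute B (-B) (Commute.neg_right (Commute.refl B))
  rw [neg_add_cancel] at h1
  rw [add_neg_cancel] at h2
  rw [NormedSpace.exp_zero] at h1 h2
  exact ⟨h1.symm, h2.symm⟩

end Stmt13Aux

/-- Lemma 4 (angular warping gradient): for skew-symmetric `S`, differentiable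
`θ : ℝ^{n+1} → ℝ` with gradient `g` at `x` (i.e. `fderiv θ x v = g ⬝ᵥ v`), the map
`T(y) = e^{Sθ(y)} y` is differentiable at `x` with transposed Jacobian
`∇T(x) = (I − g xᵀ S) e^{−Sθ(x)}` (so `fderiv T x v = ∇T(x)ᵀ *ᵥ v`); moreover if
`1 − xᵀ S g ≠ 0` then `∇T(x)` is invertible with inverse
`e^{Sθ(x)} (I + (1 − xᵀ S g)⁻¹ g xᵀ S)`. -/
theorem stmt13 (n : ℕ) (S : Matrix (Fin (n + 1)) (Fin (n + 1)) ℝ) (hskew : Sᵀ = -S)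
    (θ : (Fin (n + 1) → ℝ) → ℝ) (x g : Fin (n + 1) → ℝ)
    (hθ : DifferentiableAt ℝ θ x)
    (hg : ∀ v, fderiv ℝ θ x v = g ⬝ᵥ v)
    (T : (Fin (n + 1) → ℝ) → (Fin (n + 1) → ℝ))
    (hT : ∀ y, T y = NormedSpace.exp (θ y • S) *ᵥ y) :
    DifferentiableAt ℝ T x ∧
    (∀ v, fderiv ℝ T x v =
      ((1 - vecMulVec g x * S) * NormedSpace.exp (-(θ x) • S))ᵀ *ᵥ v) ∧
    (1 - x ⬝ᵥ (S *ᵥ g) ≠ 0 →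
      ((1 - vecMulVec g x * S) * NormedSpace.exp (-(θ x) • S)) *
        (NormedSpace.exp (θ x • S) *
          (1 + (1 - x ⬝ᵥ (S *ᵥ g))⁻¹ • (vecMulVec g x * S))) = 1 ∧
      (NormedSpace.exp (θ x • S) *
          (1 + (1 - x ⬝ᵥ (S *ᵥ g))⁻¹ • (vecMulVec g x * S))) *
        ((1 - vecMulVec g x * S) * NormedSpace.exp (-(θ x) • S)) = 1) := by
  classical
  have hTfun : T = fun y => NormedSpace.exp (θ y • S) *ᵥ y := funext hT
  set E : Matrix (Fin (n + 1)) (Fin (n + 1)) ℝ := NormedSpace.exp (θ x • S) with hE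
  -- derivative of y ↦ exp (θ y • S)
  have hθ' : HasFDerivAt θ (fderiv ℝ θ x) x := hθ.hasFDerivAt
  have hexp : HasDerivAt (fun u : ℝ => NormedSpace.exp (u • S)) (E * S) (θ x) :=
    hasDerivAt_exp_smul_const S (θ x)
  have hF : HasFDerivAt (fun y => NormedSpace.exp (θ y • S))
      (((1 : ℝ →L[ℝ] ℝ).smulRight (E * S)).comp (fderiv ℝ θ x)) x :=
    hexp.hasFDerivAt.comp x hθ'
  -- bilinear map
  have hB := Stmt13Aux.mulVec_isBoundedBilinearMap (n + 1)
  have hBd : HasFDerivAt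
      (fun p : Matrix (Fin (n + 1)) (Fin (n + 1)) ℝ × (Fin (n + 1) → ℝ) => p.1 *ᵥ p.2)
      (hB.deriv (E, x)) (E, x) := hB.hasFDerivAt (E, x)
  have hpair : HasFDerivAt (fun y => (NormedSpace.exp (θ y • S), y))
      ((((1 : ℝ →L[ℝ] ℝ).smulRight (E * S)).comp (fderiv ℝ θ x)).prod (ContinuousLinearMap.id ℝ _)) x :=
    hF.prodMk (hasFDerivAt_id x)
  have hcomp := HasFDerivAt.comp (𝕜 := ℝ)
      (f := fun y => (NormedSpace.exp (θ y • S), y))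
      (g := fun p : Matrix (Fin (n + 1)) (Fin (n + 1)) ℝ × (Fin (n + 1) → ℝ) => p.1 *ᵥ p.2)
      x hBd hpair
  have hTd : HasFDerivAt T ((hB.deriv (E, x)).comp
      ((((1 : ℝ →L[ℝ] ℝ).smulRight (E * S)).comp (fderiv ℝ θ x)).prod (ContinuousLinearMap.id ℝ _))) x := by
    rw [hTfun]
    exact hcomp
  refine ⟨hTd.differentiableAt, ?_, ?_⟩
  · intro v
    rw [hTd.fderiv]
    -- LHS value
    have hL : ((hB.deriv (E, x)).comp
        ((((1 : ℝ →L[ℝ] ℝ).smulRight (E * S)).comp (fderiv ℝ θ x)).prod (ContinuousLinearMap.id ℝ _))) v =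
        E *ᵥ v + (g ⬝ᵥ v) • ((E * S) *ᵥ x) := by
      change E *ᵥ v + ((fderiv ℝ θ x v) • (E * S)) *ᵥ x = _
      rw [hg v]
      rw [Matrix.smul_mulVec]
    rw [hL]
    -- RHS matrix simplification
    have htr : ((1 - vecMulVec g x * S) * NormedSpace.exp (-(θ x) • S))ᵀ =
        E * (1 + S * vecMulVec x g) := by
      rw [Matrix.transpose_mul, Matrix.transpose_sub, Matrix.transpose_one,
        Matrix.transpose_mul, Stmt13Aux.vecMulVec_transpose, hskew]
      have : (NormedSpace.exp (-(θ x) • S))ᵀ = E := by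
        rw [← Matrix.exp_transpose]
        congr 1
        rw [Matrix.transpose_smul, hskew]
        simp
      rw [this]
      congr 1
      simp [Matrix.neg_mul, sub_neg_eq_add]
    rw [htr]
    rw [mul_add, mul_one, Matrix.add_mulVec]
    congr 1
    have h1 : (S * vecMulVec x g) *ᵥ v = (g ⬝ᵥ v) • (S *ᵥ x) := by
      rw [← Matrix.mulVec_mulVec, Stmt13Aux.vecMulVec_mulVec, Matrix.mulVec_smul]
    conv_rhs => rw [← Matrix.mulVec_mulVec]
    rw [h1, Matrix.mulVec_smul, Matrix.mulVec_mulVec]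
  · intro hc
    set c : ℝ := x ⬝ᵥ (S *ᵥ g) with hcdef
    set A : Matrix (Fin (n + 1)) (Fin (n + 1)) ℝ := vecMulVec g x * S with hA
    have hsq : A * A = c • A := Stmt13Aux.sq_eq g x S
    obtain ⟨hinv1, hinv2⟩ := Stmt13Aux.inv_aux hc A hsq
    have hnegsmul : -(θ x) • S = -(θ x • S) := by rw [neg_smul]
    obtain ⟨hexp1, hexp2⟩ := Stmt13Aux.exp_mul_exp_neg (n + 1) (θ x • S)
    constructor
    · calc (1 - A) * NormedSpace.exp (-(θ x) • S) *
          (NormedSpace.exp (θ x • S) * (1 + (1 - c)⁻¹ • A))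
          = (1 - A) * (NormedSpace.exp (-(θ x • S)) * NormedSpace.exp (θ x • S)) *
            (1 + (1 - c)⁻¹ • A) := by
              rw [hnegsmul]; noncomm_ring
        _ = (1 - A) * (1 + (1 - c)⁻¹ • A) := by rw [hexp1, mul_one]
        _ = 1 := hinv1
    · calc NormedSpace.exp (θ x • S) * (1 + (1 - c)⁻¹ • A) *
          ((1 - A) * NormedSpace.exp (-(θ x) • S))
          = NormedSpace.exp (θ x • S) * ((1 + (1 - c)⁻¹ • A) * (1 - A)) *
            NormedSpace.exp (-(θ x • S)) := by
              rw [hnegsmul]; noncomm_ring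
        _ = NormedSpace.exp (θ x • S) * NormedSpace.exp (-(θ x • S)) := by
            rw [hinv2, mul_one]
        _ = 1 := hexp2
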